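/- Let M ⊂ ℙ^N be a linear subspace of dimension k and let X ⊂ ℙ^N be a smooth complete intersection of dimension n and codimension r (so N = n + r) containing M, with 2k < n. Then there exists a hyperplane H ⊂ ℙ^N passing through M which does not contain the embedded tangent space T_p X for any point p ∈ M. -/

import Mathlib

noncomputable section

open MvPolynomial

/-- A family of homogeneous polynomials cuts out a *smooth* complete
intersection (in projective space) iff the affine cone is smooth away from the
origin, i.e. at every nonzero common zero the gradients of the defining
equations are linearly independent. -/
def ConeSmooth {σ : Type*} [Fintype σ] {r : ℕ}
    (F : Fin r → MvPolynomial σ ℂ) : Prop :=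
  ∀ x : σ → ℂ, x ≠ 0 → (∀ i, eval x (F i) = 0) →
    LinearIndependent ℂ
      (fun i : Fin r => fun j : σ => eval x (pderiv j (F i)))

/-- The linear form `Σ_j ∂_j F_i(x) · v_j` cut out by the gradient of the
`i`-th defining equation at the point `x` of the affine cone. -/
def gradForm {N s : ℕ} (F : Fin s → MvPolynomial (Fin N) ℂ)
    (x : Fin N → ℂ) (i : Fin s) : (Fin N → ℂ) →ₗ[ℂ] ℂ :=
  ∑ j, eval x (pderiv j (F i)) • LinearMap.proj j

/-- The affine cone over the embedded (projective) tangent space at `x` of the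
variety cut out by the equations `F`: the common kernel of the gradients. -/
def TangentCone {N s : ℕ} (F : Fin s → MvPolynomial (Fin N) ℂ)
    (x : Fin N → ℂ) : Submodule ℂ (Fin N → ℂ) :=
  ⨅ i, LinearMap.ker (gradForm F x i)

/- ### Auxiliary lemmas -/

lemma hasFDerivAt_mvpeval {N : ℕ} (P : MvPolynomial (Fin N) ℂ) (x : Fin N → ℂ) :
    HasFDerivAt (fun y : Fin N → ℂ => eval y P)
      (∑ j, eval x (pderiv j P) • (ContinuousLinearMap.proj j : (Fin N → ℂ) →L[ℂ] ℂ)) x := by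
  induction P using MvPolynomial.induction_on with
  | C a =>
      have h0 : HasFDerivAt (fun _ : Fin N → ℂ => (a : ℂ)) (0 : (Fin N → ℂ) →L[ℂ] ℂ) x :=
        hasFDerivAt_const a x
      have e : (∑ j, eval x (pderiv j (C a)) •
          (ContinuousLinearMap.proj j : (Fin N → ℂ) →L[ℂ] ℂ)) = 0 :=
        Finset.sum_eq_zero fun j _ => by ext v; simp
      rw [e]; exact h0.congr_of_eventuallyEq (Filter.Eventually.of_forall fun y => by simp)
  | add p q hp hq =>
      have h0 := hp.add hq
      have e : (∑ j, eval x (pderiv j (p + q)) •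
          (ContinuousLinearMap.proj j : (Fin N → ℂ) →L[ℂ] ℂ)) =
          (∑ j, eval x (pderiv j p) • (ContinuousLinearMap.proj j : (Fin N → ℂ) →L[ℂ] ℂ)) +
          ∑ j, eval x (pderiv j q) • (ContinuousLinearMap.proj j : (Fin N → ℂ) →L[ℂ] ℂ) := by
        rw [← Finset.sum_add_distrib]
        exact Finset.sum_congr rfl fun j _ => by ext v; simp [add_mul]
      rw [e]; exact h0.congr_of_eventuallyEq (Filter.Eventually.of_forall fun y => by simp)
  | mul_X p j hp =>
      have h1 : HasFDerivAt (fun y : Fin N → ℂ => y j)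
          (ContinuousLinearMap.proj j : (Fin N → ℂ) →L[ℂ] ℂ) x :=
        (ContinuousLinearMap.proj (R := ℂ) (φ := fun _ : Fin N => ℂ) j).hasFDerivAt
      have h3 : HasFDerivAt (fun y : Fin N → ℂ => eval y (p * X j))
          (eval x p • (ContinuousLinearMap.proj j : (Fin N → ℂ) →L[ℂ] ℂ) +
            x j • ∑ j', eval x (pderiv j' p) • (ContinuousLinearMap.proj j' : (Fin N → ℂ) →L[ℂ] ℂ)) x := by
        exact (hp.mul h1).congr_of_eventuallyEq (Filter.Eventually.of_forall fun y => by simp)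
      convert h3 using 1
      ext v
      simp only [pderiv_mul, pderiv_X, map_add, ContinuousLinearMap.sum_apply,
        ContinuousLinearMap.smul_apply, ContinuousLinearMap.proj_apply,
        ContinuousLinearMap.add_apply, smul_eq_mul, map_mul, eval_X,
        Pi.single_apply, apply_ite (eval x), eval_zero, mul_ite, mul_one, mul_zero,
        ite_mul, zero_mul, mul_add, Finset.sum_add_distrib, map_one]
      have expand : ∀ x1 : Fin N, ((eval x (pderiv x1 p)) * x j
            + if j = x1 then eval x p else eval x (0 : MvPolynomial (Fin N) ℂ)) * v x1
          = eval x (pderiv x1 p) * x j * v x1 + (if j = x1 then eval x p * v x1 else 0) := by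
        intro x1; by_cases h : j = x1 <;> simp [h] <;> ring
      have e1 : ∑ x1, (if j = x1 then eval x p * v x1 else 0) = eval x p * v j := by
        simp
      have e2 : ∑ x1, eval x (pderiv x1 p) * x j * v x1
          = x j * ∑ x1, eval x (pderiv x1 p) * v x1 := by
        rw [Finset.mul_sum]; exact Finset.sum_congr rfl fun _ _ => by ring
      calc ∑ x1, ((eval x (pderiv x1 p)) * x j
            + if j = x1 then eval x p else eval x (0 : MvPolynomial (Fin N) ℂ)) * v x1
          = ∑ x1, (eval x (pderiv x1 p) * x j * v x1 + (if j = x1 then eval x p * v x1 else 0)) :=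
            Finset.sum_congr rfl fun x1 _ => expand x1
        _ = _ := by rw [Finset.sum_add_distrib, e1, e2, add_comm]

lemma differentiable_mvpeval {N : ℕ} (P : MvPolynomial (Fin N) ℂ) :
    Differentiable ℂ (fun y : Fin N → ℂ => eval y P) :=
  fun x => (hasFDerivAt_mvpeval P x).differentiableAt

lemma homog_eval_smul {σ : Type*} [Fintype σ] {P : MvPolynomial σ ℂ} {d : ℕ}
    (h : P.IsHomogeneous d) (c : ℂ) (x : σ → ℂ) :
    eval (c • x) P = c ^ d * eval x P := by
  rw [eval_eq, eval_eq, Finset.mul_sum]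
  apply Finset.sum_congr rfl
  intro m hm
  have hdeg : (Finsupp.degree m) = d := by
    rw [Finsupp.degree_eq_weight_one]
    exact h (mem_support_iff.mp hm)
  have hsum : ∑ j, m j = d := by
    rw [← hdeg, Finsupp.degree]
    exact (Finset.sum_subset (Finset.subset_univ _) (fun j _ hj => by
      simpa using Finsupp.notMem_support_iff.mp hj)).symm
  have ext : ∀ y : σ → ℂ, ∏ i ∈ m.support, y i ^ m i = ∏ j, y j ^ m j := by
    intro y
    exact Finset.prod_subset (Finset.subset_univ _) (fun j _ hj => by
      simp [Finsupp.notMem_support_iff.mp hj])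
  have key : ∏ j, (c • x) j ^ m j = c ^ d * ∏ j, x j ^ m j := by
    simp only [Pi.smul_apply, smul_eq_mul, mul_pow]
    rw [Finset.prod_mul_distrib, Finset.prod_pow_eq_pow_sum, hsum]
  rw [ext, ext, key]; ring

lemma pderiv_isHomogeneous {σ : Type*} [DecidableEq σ] {P : MvPolynomial σ ℂ} {d : ℕ}
    (h : P.IsHomogeneous d) (j : σ) : (pderiv j P).IsHomogeneous (d - 1) := by
  conv_lhs => rw [P.as_sum]
  rw [map_sum]
  apply IsHomogeneous.sum
  intro m hm
  rw [pderiv_monomial]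
  by_cases hj : m j = 0
  · simp [hj, isHomogeneous_zero]
  · apply isHomogeneous_monomial
    have hdeg : Finsupp.degree m = d := by
      rw [Finsupp.degree_eq_weight_one]
      exact h (mem_support_iff.mp hm)
    have h1 : Finsupp.single j 1 ≤ m := Finsupp.single_le_iff.mpr (Nat.one_le_iff_ne_zero.mpr hj)
    have h2 : (m - Finsupp.single j 1) + Finsupp.single j 1 = m := tsub_add_cancel_of_le h1
    have h3 : Finsupp.degree (Finsupp.single j (1:ℕ)) = 1 := by
      exact Finsupp.degree_single j 1
    have h4 : Finsupp.degree (m - Finsupp.single j 1) + Finsupp.degree (Finsupp.single j (1:ℕ))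
        = Finsupp.degree m := by
      rw [← map_add, h2]
    omega

open MeasureTheory in
lemma det_zero_of_ker {V : Type*} [AddCommGroup V] [Module ℝ V] [FiniteDimensional ℝ V]
    (f : V →ₗ[ℝ] V) (v : V) (hv : v ≠ 0) (hfv : f v = 0) : LinearMap.det f = 0 := by
  by_contra h
  have hu : IsUnit (LinearMap.toMatrix (Module.finBasis ℝ V) (Module.finBasis ℝ V) f).det := by
    rw [LinearMap.det_toMatrix]; exact isUnit_iff_ne_zero.2 h
  set e := LinearEquiv.ofIsUnitDet hu with he
  have hev : (e : V →ₗ[ℝ] V) = f := LinearEquiv.coe_ofIsUnitDet hu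
  have h1 : e v = 0 := by
    rw [show e v = f v from congrFun (congrArg (fun (g : V →ₗ[ℝ] V) => (g : V → V)) hev) v, hfv]
  have h2 : e v = e 0 := by rw [h1, map_zero]
  exact hv (e.injective h2)

open MeasureTheory in
lemma range_null {D m : ℕ} (hm : m < D) (f : (Fin m → ℂ) → (Fin D → ℂ))
    (hf : Differentiable ℂ f) : volume (Set.range f) = 0 := by
  classical
  set π : (Fin D → ℂ) →L[ℂ] (Fin m → ℂ) :=
    ContinuousLinearMap.pi (fun j => ContinuousLinearMap.proj (Fin.castLE hm.le j)) with hπ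
  have hπsurj : ∀ u : Fin m → ℂ, ∃ w : Fin D → ℂ, π w = u := by
    intro u
    refine ⟨fun i => if h : (i : ℕ) < m then u ⟨i, h⟩ else 0, ?_⟩
    funext j
    simp [hπ, Fin.castLE]
  have hsub : Set.range f ⊆ Set.range (f ∘ π) := by
    rintro _ ⟨u, rfl⟩
    obtain ⟨w, hw⟩ := hπsurj u
    exact ⟨w, by simp [hw]⟩
  have key : volume (Set.range (f ∘ π)) = 0 := by
    have : Set.range (f ∘ π) = (f ∘ π) '' Set.univ := (Set.image_univ).symm
    rw [this]
    apply addHaar_image_eq_zero_of_det_fderivWithin_eq_zero (volume : Measure (Fin D → ℂ))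
      (f' := fun x => ((fderiv ℂ f (π x)).comp π).restrictScalars ℝ)
    · intro x _
      exact (((hf (π x)).hasFDerivAt.comp x π.hasFDerivAt).restrictScalars ℝ).hasFDerivWithinAt
    · intro x _
      apply det_zero_of_ker _ (Pi.single ⟨m, hm⟩ 1)
      · simp only [ne_eq, funext_iff, not_forall]
        exact ⟨⟨m, hm⟩, by simp⟩
      · have hπv : π (Pi.single (⟨m, hm⟩ : Fin D) (1:ℂ)) = 0 := by
          funext j
          have : (Fin.castLE hm.le j) ≠ ⟨m, hm⟩ := by
            intro hh
            have := congrArg Fin.val hh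
            simp [Fin.castLE] at this
            omega
          simp [hπ, Pi.single_eq_of_ne this]
        show ((fderiv ℂ f (π _)).comp π) _ = 0
        simp [hπv]
  exact measure_mono_null hsub key

open MeasureTheory in
/-- the Claim in the proof of Lemma 3.5: Let `M ⊂ ℙ^N` be a
linear subspace of dimension `k` (affine cone of dimension `k + 1`) and
`X ⊂ ℙ^N` a smooth complete intersection of dimension `n` and codimension `r`
(so `N = n + r`) containing `M`, with `2k < n`.  Then there is a hyperplane
`H = {Σ a_j x_j = 0}` of `ℙ^N` passing through `M` which contains no embedded
tangent space `T_p X` for `p ∈ M`. -/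
theorem hyperplane_through_linear_space_avoiding_tangents
    (n r k : ℕ) (hk : 2 * k < n) (d : Fin r → ℕ)
    (F : Fin r → MvPolynomial (Fin (n + r + 1)) ℂ)
    (hhom : ∀ i, (F i).IsHomogeneous (d i))
    (hsm : ConeSmooth F)
    (M : Submodule ℂ (Fin (n + r + 1) → ℂ))
    (hMrk : Module.finrank ℂ M = k + 1)
    (hMX : ∀ x ∈ M, ∀ i, eval x (F i) = 0) :
    ∃ a : Fin (n + r + 1) → ℂ, a ≠ 0 ∧
      (∀ x ∈ M, ∑ j, a j * x j = 0) ∧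
      (∀ p ∈ M, p ≠ 0 → ∃ v ∈ TangentCone F p, ∑ j, a j * v j ≠ 0) := by
  classical
  -- basis of M
  let b : Module.Basis (Fin (k+1)) ℂ M := Module.finBasisOfFinrankEq ℂ M hMrk
  let e : Fin (k+1) → (Fin (n+r+1) → ℂ) := fun t => (b t : Fin (n+r+1) → ℂ)
  have hrep : ∀ (x : Fin (n+r+1) → ℂ) (hx : x ∈ M), x = ∑ t, b.repr ⟨x, hx⟩ t • e t := by
    intro x hx
    have h1 := b.sum_repr ⟨x, hx⟩
    have h2 := congrArg (fun (y : M) => (y : Fin (n+r+1) → ℂ)) h1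
    simp only [Submodule.coe_sum, Submodule.coe_smul] at h2
    exact h2.symm
  -- the annihilator-type subspace W
  let ℓ : Fin (k+1) → ((Fin (n+r+1) → ℂ) →ₗ[ℂ] ℂ) := fun t => ∑ j, (e t j) • LinearMap.proj j
  let W : Submodule ℂ (Fin (n+r+1) → ℂ) := ⨅ t, LinearMap.ker (ℓ t)
  have hWker : W = LinearMap.ker (LinearMap.pi ℓ) := (LinearMap.ker_pi ℓ).symm
  have hkrD : k + r < Module.finrank ℂ W := by
    have h1 := LinearMap.finrank_range_add_finrank_ker (LinearMap.pi ℓ)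
    rw [Module.finrank_fin_fun] at h1
    have h2 : Module.finrank ℂ (LinearMap.range (LinearMap.pi ℓ)) ≤ k+1 := by
      have h3 := Submodule.finrank_le (LinearMap.range (LinearMap.pi ℓ))
      simpa [Module.finrank_fin_fun] using h3
    have h4 : Module.finrank ℂ W = Module.finrank ℂ (LinearMap.ker (LinearMap.pi ℓ)) := by
      rw [hWker]
    omega
  have hDpos : 0 < Module.finrank ℂ W := lt_of_le_of_lt (Nat.zero_le _) hkrD
  let bW : Module.Basis (Fin (Module.finrank ℂ W)) ℂ W := Module.finBasis ℂ W
  -- the parametrization of W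
  let χ : (Fin (Module.finrank ℂ W) → ℂ) →ₗ[ℂ] (Fin (n+r+1) → ℂ) :=
    W.subtype ∘ₗ (bW.equivFun.symm : (Fin (Module.finrank ℂ W) → ℂ) ≃ₗ[ℂ] W).toLinearMap
  have hχW : ∀ u, χ u ∈ W := fun u => (bW.equivFun.symm u).2
  have hχinj : Function.Injective χ := by
    have : (χ : (Fin (Module.finrank ℂ W) → ℂ) → (Fin (n+r+1) → ℂ))
        = (W.subtype : W → (Fin (n+r+1) → ℂ)) ∘ (bW.equivFun.symm : _ → W) := rfl
    rw [this]
    exact (Submodule.injective_subtype W).comp bW.equivFun.symm.injective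
  obtain ⟨ρ, hρ⟩ := χ.exists_leftInverse_of_injective (LinearMap.ker_eq_bot.mpr hχinj)
  have hρχ : ∀ u, ρ (χ u) = u := fun u => by
    have := LinearMap.congr_fun hρ u
    simpa using this
  -- the bad parametrizations
  let pz : Fin (k+1) → (Fin (k+r) → ℂ) → (Fin (n+r+1) → ℂ) := fun m z =>
    e m + ∑ j : Fin k, z (Fin.castAdd r j) • e (m.succAbove j)
  let ψ : Fin (k+1) → (Fin (k+r) → ℂ) → (Fin (n+r+1) → ℂ) := fun m z jj =>
    ∑ i : Fin r, z (Fin.natAdd k i) * eval (pz m z) (pderiv jj (F i))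
  have hψdiff : ∀ m, Differentiable ℂ (fun z => ρ (ψ m z)) := by
    intro m
    have hρd : Differentiable ℂ (ρ : (Fin (n+r+1) → ℂ) →ₗ[ℂ] _) := by
      exact (LinearMap.toContinuousLinearMap ρ).differentiable
    apply Differentiable.comp hρd
    apply differentiable_pi.mpr
    intro jj
    apply Differentiable.fun_sum
    intro i _
    have hcoord : Differentiable ℂ (fun z : Fin (k+r) → ℂ => z (Fin.natAdd k i)) :=
      (ContinuousLinearMap.proj (R := ℂ) (φ := fun _ : Fin (k+r) => ℂ)
        (Fin.natAdd k i)).differentiable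
    apply hcoord.mul
    have hpzd : Differentiable ℂ (pz m) := by
      apply Differentiable.add (differentiable_const _)
      apply Differentiable.fun_sum
      intro j _
      exact ((ContinuousLinearMap.proj (R := ℂ) (φ := fun _ : Fin (k+r) => ℂ)
        (Fin.castAdd r j)).differentiable).smul_const (e (m.succAbove j))
    exact (differentiable_mvpeval (pderiv jj (F i))).comp hpzd
  -- choose a good coordinate vector u
  have hbig : volume (({0} : Set (Fin (Module.finrank ℂ W) → ℂ))
      ∪ ⋃ m, Set.range (fun z => ρ (ψ m z))) = 0 := by
    apply measure_union_null
    · have h0 := range_null hkrD (fun _ : Fin (k+r) → ℂ =>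
        (0 : Fin (Module.finrank ℂ W) → ℂ)) (differentiable_const _)
      simpa [Set.range_const] using h0
    · exact measure_iUnion_null fun m => range_null hkrD _ (hψdiff m)
  obtain ⟨u, hu⟩ : ∃ u : Fin (Module.finrank ℂ W) → ℂ,
      u ∉ (({0} : Set (Fin (Module.finrank ℂ W) → ℂ)) ∪ ⋃ m, Set.range (fun z => ρ (ψ m z))) := by
    by_contra hcon
    push_neg at hcon
    have hcov : (Set.univ : Set (Fin (Module.finrank ℂ W) → ℂ)) ⊆ _ := fun u _ => hcon u
    have hz : volume (Set.univ : Set (Fin (Module.finrank ℂ W) → ℂ)) = 0 :=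
      measure_mono_null hcov hbig
    have hpos : 0 < volume (Set.univ : Set (Fin (Module.finrank ℂ W) → ℂ)) :=
      isOpen_univ.measure_pos _ ⟨0, trivial⟩
    rw [hz] at hpos
    exact lt_irrefl 0 hpos
  have hu0 : u ≠ 0 := fun h => hu (Set.mem_union_left _ (by simp [h]))
  have huR : ∀ m, u ∉ Set.range (fun z => ρ (ψ m z)) := fun m hmem =>
    hu (Set.mem_union_right _ (Set.mem_iUnion.mpr ⟨m, hmem⟩))
  refine ⟨χ u, ?_, ?_, ?_⟩
  · -- χ u ≠ 0
    intro h
    exact hu0 (hχinj (by simpa using h))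
  · -- vanishes on M
    intro x hx
    have haW : χ u ∈ W := hχW u
    have hat : ∀ t, ∑ j, e t j * χ u j = 0 := by
      intro t
      have h5 : χ u ∈ LinearMap.ker (ℓ t) := by
        have := (Submodule.mem_iInf (fun t => LinearMap.ker (ℓ t))).mp haW t
        exact this
      have h6 : ℓ t (χ u) = 0 := h5
      simpa [ℓ, LinearMap.sum_apply, LinearMap.proj_apply, smul_eq_mul] using h6
    rw [hrep x hx]
    have hxj : ∀ j, (∑ t, b.repr ⟨x, hx⟩ t • e t) j = ∑ t, b.repr ⟨x, hx⟩ t * e t j := by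
      intro j; simp [Finset.sum_apply]
    calc ∑ j, χ u j * (∑ t, b.repr ⟨x, hx⟩ t • e t) j
        = ∑ j, ∑ t, b.repr ⟨x, hx⟩ t * (e t j * χ u j) := by
          apply Finset.sum_congr rfl
          intro j _
          rw [hxj j, Finset.mul_sum]
          apply Finset.sum_congr rfl
          intro t _
          ring
      _ = ∑ t, b.repr ⟨x, hx⟩ t * ∑ j, e t j * χ u j := by
          rw [Finset.sum_comm]
          exact Finset.sum_congr rfl fun t _ => by rw [Finset.mul_sum]
      _ = 0 := by
          apply Finset.sum_eq_zero
          intro t _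
          rw [hat t, mul_zero]
  · -- avoids all tangent cones
    intro p hp hp0
    by_contra hcon
    push_neg at hcon
    set a : Fin (n+r+1) → ℂ := χ u with ha_def
    -- the functional of a kills the tangent cone, hence lies in the span of the gradients
    let K : (Fin (n+r+1) → ℂ) →ₗ[ℂ] ℂ := ∑ j, a j • LinearMap.proj j
    have hker : (⨅ i, LinearMap.ker (gradForm F p i)) ≤ LinearMap.ker K := by
      intro v hv
      have h7 := hcon v hv
      have : K v = ∑ j, a j * v j := by
        simp [K, LinearMap.sum_apply, LinearMap.proj_apply, smul_eq_mul]
      rw [LinearMap.mem_ker, this, h7]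
    have hspan := mem_span_of_iInf_ker_le_ker hker
    obtain ⟨c, hc⟩ := (Submodule.mem_span_range_iff_exists_fun ℂ).1 hspan
    have ha : ∀ jj, a jj = ∑ i, c i * eval p (pderiv jj (F i)) := by
      intro jj
      have h8 := congrArg (fun (L : (Fin (n+r+1) → ℂ) →ₗ[ℂ] ℂ) => L (Pi.single jj 1)) hc
      simp only [K, LinearMap.sum_apply, LinearMap.smul_apply, LinearMap.proj_apply,
        smul_eq_mul, gradForm, Pi.single_apply, mul_ite, mul_one, mul_zero,
        Finset.sum_ite_eq', Finset.mem_univ, if_true] at h8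
      exact h8.symm
    -- normalize p
    have hup : p = ∑ t, b.repr ⟨p, hp⟩ t • e t := hrep p hp
    set u' : Fin (k+1) → ℂ := fun t => b.repr ⟨p, hp⟩ t with hu'
    obtain ⟨m, hm⟩ : ∃ m, u' m ≠ 0 := by
      by_contra h
      push_neg at h
      apply hp0
      rw [hup]
      exact Finset.sum_eq_zero fun t _ => by rw [show b.repr ⟨p, hp⟩ t = u' t from rfl, h t, zero_smul]
    set lam : ℂ := (u' m)⁻¹ with hlam_def
    have hlam : lam ≠ 0 := inv_ne_zero hm
    set z : Fin (k+r) → ℂ := Fin.append (fun j : Fin k => lam * u' (m.succAbove j))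
      (fun i : Fin r => c i / lam ^ (d i - 1)) with hz
    have hpz : pz m z = lam • p := by
      have hps : lam • p = ∑ t, (lam * u' t) • e t := by
        rw [hup, Finset.smul_sum]
        exact Finset.sum_congr rfl fun t _ => by rw [smul_smul]
      rw [hps, Fin.sum_univ_succAbove (fun t => (lam * u' t) • e t) m]
      have h9 : (lam * u' m) • e m = e m := by
        rw [hlam_def, inv_mul_cancel₀ hm, one_smul]
      rw [h9]
      show e m + ∑ j : Fin k, z (Fin.castAdd r j) • e (m.succAbove j) = _
      congr 1
      apply Finset.sum_congr rfl
      intro j _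
      rw [hz, Fin.append_left]
    have haψ : ψ m z = a := by
      funext jj
      show ∑ i : Fin r, z (Fin.natAdd k i) * eval (pz m z) (pderiv jj (F i)) = a jj
      rw [hpz, ha jj]
      apply Finset.sum_congr rfl
      intro i _
      rw [hz, Fin.append_right]
      rw [homog_eval_smul (pderiv_isHomogeneous (hhom i) jj) lam p]
      have hpow : lam ^ (d i - 1) ≠ 0 := pow_ne_zero _ hlam
      field_simp
    exact huR m ⟨z, by show ρ (ψ m z) = u; rw [haψ]; exact hρχ u⟩

end
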